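/- Let D ⊆ ℝ and suppose f_0, f_1, …, f_m are strictly increasing real-valued functions defined on D. Then H^1({ Σ_{k=0}^m f_k(x) : x ∈ D }) ≤ Σ_{k=0}^m H^1(f_k(D)), where H^1 denotes the 1-dimensional Hausdorff measure on ℝ. -/

import Mathlib

open MeasureTheory

open Set Filter


/-- A continuous surjective Stieltjes function pushes its measure forward to Lebesgue measure. -/
lemma mapStieltjes (R : StieltjesFunction ℝ) (hc : Continuous R) (hs : Function.Surjective R) :
    Measure.map R R.measure = volume := by
  have key : ∀ y : ℝ, ∃ c, (⇑R) ⁻¹' (Iic y) = Iic c ∧ R c = y := by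
    intro y
    set s := (⇑R) ⁻¹' (Iic y) with hs_def
    obtain ⟨x, hx⟩ := hs y
    have hne : s.Nonempty := ⟨x, by simp [hs_def, hx.le]⟩
    obtain ⟨z, hz⟩ := hs (y + 1)
    have hbdd : BddAbove s := by
      refine ⟨z, fun w hw => ?_⟩
      by_contra hwz
      push_neg at hwz
      have : R z ≤ R w := R.mono hwz.le
      have hw' : R w ≤ y := hw
      rw [hz] at this
      linarith
    have hclosed : IsClosed s := IsClosed.preimage hc isClosed_Iic
    have hmem : sSup s ∈ s := hclosed.csSup_mem hne hbdd
    refine ⟨sSup s, ?_, le_antisymm hmem ?_⟩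
    · ext w
      constructor
      · intro hw; exact le_csSup hbdd hw
      · intro hw; exact (R.mono hw).trans hmem
    · have : x ≤ sSup s := le_csSup hbdd (by simp [hs_def, hx.le])
      calc y = R x := hx.symm
        _ ≤ R (sSup s) := R.mono this
  symm
  refine Measure.ext_of_Ioc volume (Measure.map (⇑R) R.measure) (fun a b hab => ?_)
  obtain ⟨ca, hca, hRca⟩ := key a
  obtain ⟨cb, hcb, hRcb⟩ := key b
  have hcacb : ca ≤ cb := by
    have : Iic ca ⊆ Iic cb := by
      rw [← hca, ← hcb]; exact fun w hw => le_trans hw hab.le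
    simpa using this (le_refl ca)
  rw [Measure.map_apply hc.measurable measurableSet_Ioc]
  have : (⇑R) ⁻¹' (Ioc a b) = Ioc ca cb := by
    rw [← Iic_sdiff_Iic, preimage_diff, hca, hcb, Iic_sdiff_Iic]
  rw [this, R.measure_Ioc, hRca, hRcb, Real.volume_Ioc]

lemma key_split (F : Set ℝ) (p : ℝ → ℝ) (M : ℝ)
    (hF : F ⊆ Icc (-M) M) (hpF : ∀ v ∈ F, p v ∈ Icc (-M) M)
    (hmono : ∀ v ∈ F, ∀ v' ∈ F, v ≤ v' → p v ≤ p v' ∧ p v' - p v ≤ v' - v) :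
    volume F ≤ volume (p '' F) + volume ((fun v => v - p v) '' F) := by
  rcases F.eq_empty_or_nonempty with rfl | hne
  · simp
  haveI : Nonempty F := hne.to_subtype
  -- the McShane-type monotone 1-Lipschitz extension of p
  set P0 : ℝ → ℝ := fun v => ⨆ w : F, (p w - max ((w : ℝ) - v) 0) with hP0_def
  have hbdd : ∀ v : ℝ, BddAbove (range fun w : F => p w - max ((w : ℝ) - v) 0) := by
    intro v
    refine ⟨M, fun y hy => ?_⟩
    obtain ⟨w, rfl⟩ := hy
    have h1 := (hpF w w.2).2
    have h0 : (0:ℝ) ≤ max ((w : ℝ) - v) 0 := le_max_right _ _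
    dsimp only
    linarith
  have hP0_eq : ∀ v ∈ F, P0 v = p v := by
    intro v hv
    refine le_antisymm (ciSup_le fun w => ?_) ?_
    · rcases le_total (w : ℝ) v with h | h
      · have h1 : max ((w : ℝ) - v) 0 = 0 := max_eq_right (by linarith)
        have h2 := (hmono w w.2 v hv h).1
        linarith
      · have h1 : max ((w : ℝ) - v) 0 = (w : ℝ) - v := max_eq_left (by linarith)
        have h2 := (hmono v hv w w.2 h).2
        linarith
    · have := le_ciSup (hbdd v) (⟨v, hv⟩ : F)
      simpa using this
  have hP0_mono : Monotone P0 := by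
    intro v v' hvv'
    refine ciSup_mono (hbdd v') fun w => ?_
    have : max ((w : ℝ) - v') 0 ≤ max ((w : ℝ) - v) 0 :=
      max_le_max (by linarith) le_rfl
    linarith
  have hP0_lip : ∀ v v', v ≤ v' → P0 v' ≤ P0 v + (v' - v) := by
    intro v v' h
    refine ciSup_le fun w => ?_
    have h1 : max ((w : ℝ) - v) 0 ≤ max ((w : ℝ) - v') 0 + (v' - v) := by
      refine max_le ?_ ?_
      · have := le_max_left ((w : ℝ) - v') 0; linarith
      · have := le_max_right ((w : ℝ) - v') 0; linarith
    have h2 := le_ciSup (hbdd v) w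
    linarith
  -- the clamp
  obtain ⟨v0, hv0⟩ := hne
  have hMM : -M ≤ M := le_trans (hF hv0).1 (hF hv0).2
  set c : ℝ → ℝ := fun v => max (-M) (min v M) with hc_def
  have hc_eq : ∀ v ∈ F, c v = v := by
    intro v hv
    simp only [hc_def]
    rw [min_eq_left (hF hv).2, max_eq_right (hF hv).1]
  have hc_lip : ∀ v v', v ≤ v' → c v ≤ c v' ∧ c v' - c v ≤ v' - v := by
    intro v v' h
    simp only [hc_def, min_def, max_def]
    constructor <;> (split_ifs <;> linarith)
  -- the extension, made surjective
  set P : ℝ → ℝ := fun v => P0 (c v) + (v - c v) / 2 with hP_def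
  have hP_inc : ∀ v v', v ≤ v' → 0 ≤ P v' - P v ∧ P v' - P v ≤ v' - v := by
    intro v v' h
    obtain ⟨hc1, hc2⟩ := hc_lip v v' h
    have e1 : P0 (c v) ≤ P0 (c v') := hP0_mono hc1
    have e2 : P0 (c v') ≤ P0 (c v) + (c v' - c v) := hP0_lip _ _ hc1
    constructor <;> · simp only [hP_def]; linarith
  have hP_eq : ∀ v ∈ F, P v = p v := by
    intro v hv
    simp only [hP_def, hc_eq v hv, hP0_eq v hv, sub_self, zero_div, add_zero]
  have hP_mono : Monotone P := fun v v' h => by linarith [(hP_inc v v' h).1]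
  have hQ_mono : Monotone (fun v => v - P v) := by
    intro v v' h
    have := (hP_inc v v' h).2
    simp only
    linarith
  have hP_cont : Continuous P := by
    have : LipschitzWith 1 P := by
      refine LipschitzWith.of_dist_le_mul fun v v' => ?_
      rw [Real.dist_eq, Real.dist_eq, NNReal.coe_one, one_mul]
      rcases le_total v v' with h | h
      · obtain ⟨h1, h2⟩ := hP_inc v v' h
        rw [abs_of_nonpos (by linarith : P v - P v' ≤ 0),
          abs_of_nonpos (by linarith : v - v' ≤ 0)]
        linarith
      · obtain ⟨h1, h2⟩ := hP_inc v' v h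
        rw [abs_of_nonneg (by linarith : (0:ℝ) ≤ P v - P v'),
          abs_of_nonneg (by linarith : (0:ℝ) ≤ v - v')]
        linarith
    exact this.continuous
  have lin_top : ∀ a b : ℝ, Tendsto (fun v : ℝ => a + (v - b) / 2) atTop atTop := by
    intro a b
    apply tendsto_atTop_add_const_left
    exact Tendsto.atTop_div_const (show (0:ℝ) < 2 by norm_num)
      (tendsto_atTop_add_const_right _ _ tendsto_id)
  have lin_bot : ∀ a b : ℝ, Tendsto (fun v : ℝ => a + (v - b) / 2) atBot atBot := by
    intro a b
    apply tendsto_atBot_add_const_left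
    exact Tendsto.atBot_div_const (show (0:ℝ) < 2 by norm_num)
      (tendsto_atBot_add_const_right _ _ tendsto_id)
  have hcM : ∀ v, M ≤ v → c v = M := by
    intro v hv
    simp only [hc_def]
    rw [min_eq_right hv, max_eq_right hMM]
  have hcM' : ∀ v, v ≤ -M → c v = -M := by
    intro v hv
    simp only [hc_def]
    exact max_eq_left (le_trans (min_le_left _ _) hv)
  have hP_top : Tendsto P atTop atTop := by
    refine Tendsto.congr' ?_ (lin_top (P0 M) M)
    filter_upwards [eventually_ge_atTop M] with v hv
    simp only [hP_def, hcM v hv]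
  have hP_bot : Tendsto P atBot atBot := by
    refine Tendsto.congr' ?_ (lin_bot (P0 (-M)) (-M))
    filter_upwards [eventually_le_atBot (-M)] with v hv
    simp only [hP_def, hcM' v hv]
  have hP_surj : Function.Surjective P := hP_cont.surjective hP_top hP_bot
  -- Q
  set Q : ℝ → ℝ := fun v => v - P v with hQ_def
  have hQ_cont : Continuous Q := continuous_id.sub hP_cont
  have hQ_top : Tendsto Q atTop atTop := by
    refine Tendsto.congr' ?_ (lin_top (M - P0 M) M)
    filter_upwards [eventually_ge_atTop M] with v hv
    simp only [hQ_def, hP_def, hcM v hv]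
    ring
  have hQ_bot : Tendsto Q atBot atBot := by
    refine Tendsto.congr' ?_ (lin_bot (-M - P0 (-M)) (-M))
    filter_upwards [eventually_le_atBot (-M)] with v hv
    simp only [hQ_def, hP_def, hcM' v hv]
    ring
  have hQ_surj : Function.Surjective Q := hQ_cont.surjective hQ_top hQ_bot
  -- Stieltjes functions
  set SP : StieltjesFunction ℝ :=
    ⟨P, hP_mono, fun x => hP_cont.continuousAt.continuousWithinAt⟩ with hSP_def
  set SQ : StieltjesFunction ℝ :=
    ⟨Q, hQ_mono, fun x => hQ_cont.continuousAt.continuousWithinAt⟩ with hSQ_def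
  have hvol : SP.measure + SQ.measure = volume := by
    symm
    refine Measure.ext_of_Ioc volume (SP.measure + SQ.measure) (fun a b hab => ?_)
    rw [Measure.add_apply, SP.measure_Ioc, SQ.measure_Ioc, Real.volume_Ioc]
    have h1 : (0:ℝ) ≤ P b - P a := by linarith [(hP_inc a b hab.le).1]
    have h2 : (0:ℝ) ≤ Q b - Q a := sub_nonneg.2 (hQ_mono hab.le)
    show ENNReal.ofReal (b - a) = ENNReal.ofReal (P b - P a) + ENNReal.ofReal (Q b - Q a)
    rw [← ENNReal.ofReal_add h1 h2]
    congr 1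
    simp only [hQ_def]
    ring
  have himgP : P '' F = p '' F := image_congr hP_eq
  have himgQ : Q '' F = (fun v => v - p v) '' F :=
    image_congr (fun v hv => by simp only [hQ_def, hP_eq v hv])
  have bound : ∀ (R : StieltjesFunction ℝ), Continuous R → Function.Surjective R →
      R.measure F ≤ volume ((⇑R) '' F) := by
    intro R hc hs
    set T := toMeasurable volume ((⇑R) '' F) with hT_def
    calc R.measure F ≤ R.measure ((⇑R) ⁻¹' T) :=
          measure_mono (fun v hv => subset_toMeasurable _ _ (mem_image_of_mem _ hv))
      _ = (Measure.map (⇑R) R.measure) T :=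
          (Measure.map_apply hc.measurable (measurableSet_toMeasurable _ _)).symm
      _ = volume T := by rw [mapStieltjes R hc hs]
      _ = volume ((⇑R) '' F) := measure_toMeasurable _
  calc volume F = SP.measure F + SQ.measure F := by
        rw [← hvol, Measure.add_apply]
    _ ≤ volume (p '' F) + volume ((fun v => v - p v) '' F) := by
        refine add_le_add ?_ ?_
        · have := bound SP hP_cont hP_surj
          rwa [show ⇑SP = P from rfl, himgP] at this
        · have := bound SQ hQ_cont hQ_surj
          rwa [show ⇑SQ = Q from rfl, himgQ] at this

lemma two_fun_bounded (D : Set ℝ) (g h : ℝ → ℝ) (n : ℝ)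
    (hg : MonotoneOn g D) (hh : MonotoneOn h D)
    (hS : StrictMonoOn (fun x => g x + h x) D)
    (hb : ∀ x ∈ D, |g x| ≤ n ∧ |h x| ≤ n) :
    volume ((fun x => g x + h x) '' D) ≤ volume (g '' D) + volume (h '' D) := by
  classical
  rcases D.eq_empty_or_nonempty with rfl | ⟨x0, hx0⟩
  · simp
  set S : ℝ → ℝ := fun x => g x + h x with hS_def
  set F : Set ℝ := S '' D with hF_def
  set p : ℝ → ℝ := fun v =>
    if hv : ∃ x, x ∈ D ∧ S x = v then g hv.choose else 0 with hp_def
  have hwit : ∀ v ∈ F, ∃ x, x ∈ D ∧ S x = v := by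
    rintro v ⟨x, hx, rfl⟩; exact ⟨x, hx, rfl⟩
  have hp_spec : ∀ v (hv : v ∈ F), (hwit v hv).choose ∈ D ∧
      S ((hwit v hv).choose) = v ∧ p v = g ((hwit v hv).choose) := by
    intro v hv
    refine ⟨(hwit v hv).choose_spec.1, (hwit v hv).choose_spec.2, ?_⟩
    simp only [hp_def, dif_pos (hwit v hv)]
  have hn0 : (0:ℝ) ≤ n := le_trans (abs_nonneg _) (hb x0 hx0).1
  refine le_trans (key_split F p (2 * n) ?_ ?_ ?_) ?_
  · rintro v ⟨x, hx, rfl⟩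
    obtain ⟨h1, h2⟩ := hb x hx
    rw [abs_le] at h1 h2
    exact ⟨by simp only [hS_def]; linarith, by simp only [hS_def]; linarith⟩
  · intro v hv
    obtain ⟨hxD, -, hpv⟩ := hp_spec v hv
    have := (hb _ hxD).1
    rw [abs_le] at this
    rw [hpv]
    exact ⟨by linarith, by linarith⟩
  · intro v hv v' hv' hle
    obtain ⟨hxD, hSx, hpv⟩ := hp_spec v hv
    obtain ⟨hxD', hSx', hpv'⟩ := hp_spec v' hv'
    set x := (hwit v hv).choose
    set x' := (hwit v' hv').choose
    have hxx' : x ≤ x' := by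
      by_contra hlt
      push_neg at hlt
      have := hS hxD' hxD hlt
      rw [hSx, hSx'] at this
      linarith
    have hgg : g x ≤ g x' := hg hxD hxD' hxx'
    have hhh : h x ≤ h x' := hh hxD hxD' hxx'
    constructor
    · rw [hpv, hpv']; exact hgg
    · rw [hpv, hpv', ← hSx, ← hSx']
      simp only [hS_def]
      linarith
  · refine add_le_add (measure_mono ?_) (measure_mono ?_)
    · rintro y ⟨v, hv, rfl⟩
      obtain ⟨hxD, -, hpv⟩ := hp_spec v hv
      exact ⟨_, hxD, hpv.symm⟩
    · rintro y ⟨v, hv, rfl⟩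
      obtain ⟨hxD, hSx, hpv⟩ := hp_spec v hv
      refine ⟨_, hxD, ?_⟩
      have hv2 : g ((hwit v hv).choose) + h ((hwit v hv).choose) = v := hSx
      show h ((hwit v hv).choose) = v - p v
      rw [hpv]
      linarith

lemma two_fun (D : Set ℝ) (g h : ℝ → ℝ)
    (hg : MonotoneOn g D) (hh : MonotoneOn h D)
    (hS : StrictMonoOn (fun x => g x + h x) D) :
    volume ((fun x => g x + h x) '' D) ≤ volume (g '' D) + volume (h '' D) := by
  set Dn : ℕ → Set ℝ := fun n => {x ∈ D | |g x| ≤ n ∧ |h x| ≤ n} with hDn_def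
  have hDn_sub : ∀ n, Dn n ⊆ D := fun n => sep_subset _ _
  have hDn_mono : Monotone Dn := by
    intro a b hab x hx
    exact ⟨hx.1, hx.2.1.trans (by exact_mod_cast Nat.cast_le.2 hab),
      hx.2.2.trans (by exact_mod_cast Nat.cast_le.2 hab)⟩
  have hUnion : (⋃ n, Dn n) = D := by
    ext x
    simp only [mem_iUnion, hDn_def, mem_setOf_eq]
    constructor
    · rintro ⟨n, hx, -⟩; exact hx
    · intro hx
      refine ⟨⌈max (|g x|) (|h x|)⌉₊, hx, ?_, ?_⟩
      · exact le_trans (le_max_left _ _) (Nat.le_ceil _)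
      · exact le_trans (le_max_right _ _) (Nat.le_ceil _)
  have himg : (fun x => g x + h x) '' D = ⋃ n, (fun x => g x + h x) '' Dn n := by
    rw [← image_iUnion, hUnion]
  rw [himg, Monotone.measure_iUnion (fun a b hab => image_mono  (hDn_mono hab))]
  refine iSup_le fun n => ?_
  refine le_trans (two_fun_bounded (Dn n) g h n (hg.mono (hDn_sub n)) (hh.mono (hDn_sub n))
    (hS.mono (hDn_sub n)) (fun x hx => hx.2)) ?_
  exact add_le_add (measure_mono (image_mono  (hDn_sub n)))
    (measure_mono (image_mono  (hDn_sub n)))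

lemma main_sum (D : Set ℝ) : ∀ (m : ℕ) (f : Fin (m + 1) → ℝ → ℝ),
    (∀ k, StrictMonoOn (f k) D) →
    volume ((fun x => ∑ k : Fin (m + 1), f k x) '' D) ≤
      ∑ k : Fin (m + 1), volume (f k '' D) := by
  intro m
  induction m with
  | zero =>
    intro f hf
    simp [Fin.sum_univ_one]
  | succ m ih =>
    intro f hf
    set g : ℝ → ℝ := fun x => ∑ k : Fin (m + 1), f k.castSucc x with hg_def
    set h : ℝ → ℝ := f (Fin.last (m + 1)) with hh_def
    have hrw : (fun x => ∑ k : Fin (m + 2), f k x) = fun x => g x + h x := by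
      funext x
      simp only [hg_def, hh_def]
      exact Fin.sum_univ_castSucc (fun k => f k x)
    have hgmono : MonotoneOn g D := by
      intro a ha b hb hab
      exact Finset.sum_le_sum fun k _ => ((hf k.castSucc).monotoneOn) ha hb hab
    have hhstrict : StrictMonoOn h D := hf (Fin.last (m + 1))
    have hSstrict : StrictMonoOn (fun x => g x + h x) D := by
      intro a ha b hb hab
      exact add_lt_add_of_le_of_lt (hgmono ha hb hab.le) (hhstrict ha hb hab)
    calc volume ((fun x => ∑ k : Fin (m + 2), f k x) '' D)
        = volume ((fun x => g x + h x) '' D) := by rw [hrw]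
      _ ≤ volume (g '' D) + volume (h '' D) :=
          two_fun D g h hgmono hhstrict.monotoneOn hSstrict
      _ ≤ (∑ k : Fin (m + 1), volume (f k.castSucc '' D)) + volume (h '' D) := by
          refine add_le_add ?_ le_rfl
          exact ih (fun k => f k.castSucc) (fun k => hf k.castSucc)
      _ = ∑ k : Fin (m + 2), volume (f k '' D) :=
          (Fin.sum_univ_castSucc (fun k => volume (f k '' D))).symm


/-- If `f₀, …, f_m` are strictly increasing functions on `D ⊆ ℝ`, then the image of `D`
under their pointwise sum satisfies `H¹({Σₖ fₖ(x) : x ∈ D}) ≤ Σₖ H¹(fₖ(D))`. -/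
theorem stmt_6 (D : Set ℝ) (m : ℕ) (f : Fin (m + 1) → ℝ → ℝ)
    (hf : ∀ k, StrictMonoOn (f k) D) :
    μH[1] ((fun x => ∑ k : Fin (m + 1), f k x) '' D) ≤
      ∑ k : Fin (m + 1), μH[1] (f k '' D) := by
  rw [hausdorffMeasure_real]
  exact main_sum D m f hf
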